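/- arXiv:1705.06037 — 4 statements merged into one kernel-verified Lean document; each statement's English description precedes it below -/
import Mathlib

section
/- For all finite hypergraphs H' and H'', the 2-section of their minimal-rank-preserving direct product equals the direct graph product of their 2-sections: [H' ×̌ H'']_2 = [H']_2 × [H'']_2 (equality of simple graphs on V(H')×V(H'')). -/
/-!
Basic definitions: finite hypergraphs (a finite nonempty vertex set `V`, given by
`[Fintype V] [Nonempty V]`, together with a set of nonempty edges), walks, distance,
connectedness, simplicity, rank, colorings, Helly property, covers,
the various hypergraph products, 2-sections, and graph products.
-/

/-- A hypergraph on a vertex type `V`: a collection of nonempty edges (finite subsets of `V`). -/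
structure Hypergraph' (V : Type*) where
  edges : Set (Finset V)
  nonempty_edges : ∀ e ∈ edges, e.Nonempty

namespace Hypergraph'

variable {V V₁ V₂ : Type*}

/-- There is a walk of length `n` from `u` to `v`: a sequence of vertices `w 0, …, w n`
and edges `f 1, …, f n` with consecutive vertices distinct and both contained
in the corresponding edge. -/
def HasWalk (H : Hypergraph' V) (u v : V) (n : ℕ) : Prop :=
  ∃ (w : Fin (n + 1) → V) (f : Fin n → Finset V),
    w 0 = u ∧ w (Fin.last n) = v ∧
      ∀ i : Fin n, f i ∈ H.edges ∧ w i.castSucc ≠ w i.succ ∧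
        w i.castSucc ∈ f i ∧ w i.succ ∈ f i

/-- The distance between two vertices: the minimum length of a walk joining them,
`⊤ = ∞` if there is none. -/
noncomputable def dist (H : Hypergraph' V) (u v : V) : ℕ∞ :=
  sInf {x : ℕ∞ | ∃ n : ℕ, x = n ∧ H.HasWalk u v n}

/-- A hypergraph is connected if any two vertices are joined by a walk. -/
def Connected (H : Hypergraph' V) : Prop := ∀ u v : V, ∃ n, H.HasWalk u v n

/-- A hypergraph is simple if every edge has at least two vertices and
no edge is contained in another edge. -/
def Simple (H : Hypergraph' V) : Prop :=
  (∀ e ∈ H.edges, 2 ≤ e.card) ∧ ∀ e ∈ H.edges, ∀ f ∈ H.edges, e ⊆ f → e = f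

/-- A hypergraph is loopless if every edge has at least two vertices. -/
def Loopless (H : Hypergraph' V) : Prop := ∀ e ∈ H.edges, 2 ≤ e.card

/-- The rank: the maximum cardinality of an edge. -/
noncomputable def rank (H : Hypergraph' V) : ℕ := sSup (Finset.card '' H.edges)

/-- The anti-rank: the minimum cardinality of an edge. -/
noncomputable def antirank (H : Hypergraph' V) : ℕ := sInf (Finset.card '' H.edges)

/-- A proper coloring: no color class contains an edge. -/
def IsProperColoring (H : Hypergraph' V) {k : ℕ} (c : V → Fin k) : Prop :=
  ∀ e ∈ H.edges, ∀ i : Fin k, ¬ ∀ v ∈ e, c v = i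

/-- A proper strong coloring: a proper coloring in which the vertices of every
edge receive pairwise distinct colors. -/
def IsStrongColoring (H : Hypergraph' V) {k : ℕ} (c : V → Fin k) : Prop :=
  H.IsProperColoring c ∧ ∀ e ∈ H.edges, ∀ u ∈ e, ∀ v ∈ e, u ≠ v → c u ≠ c v

/-- The chromatic number: the least `k` admitting a proper `k`-coloring. -/
noncomputable def chromaticNumber (H : Hypergraph' V) : ℕ :=
  sInf {k : ℕ | ∃ c : V → Fin k, H.IsProperColoring c}

/-- The strong chromatic number: the least `k` admitting a proper strong `k`-coloring. -/
noncomputable def strongChromaticNumber (H : Hypergraph' V) : ℕ :=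
  sInf {k : ℕ | ∃ c : V → Fin k, H.IsStrongColoring c}

/-- The Helly property: every intersecting family of edges is a star. -/
def Helly (H : Hypergraph' V) : Prop :=
  ∀ E' ⊆ H.edges, (∀ e ∈ E', ∀ f ∈ E', ∃ x, x ∈ e ∧ x ∈ f) → ∃ v, ∀ e ∈ E', v ∈ e

/-- The covering number: the minimum cardinality of a set of vertices meeting every edge. -/
noncomputable def coverNumber (H : Hypergraph' V) : ℕ :=
  sInf {k : ℕ | ∃ T : Finset V, T.card = k ∧ ∀ e ∈ H.edges, ∃ v ∈ T, v ∈ e}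

/-- The Cartesian product of hypergraphs. -/
def cartProd (H₁ : Hypergraph' V₁) (H₂ : Hypergraph' V₂) : Hypergraph' (V₁ × V₂) where
  edges := {E | (∃ x, ∃ f ∈ H₂.edges, E = {x} ×ˢ f) ∨ ∃ e ∈ H₁.edges, ∃ y, E = e ×ˢ {y}}
  nonempty_edges := by
    rintro E (⟨x, f, hf, rfl⟩ | ⟨e, he, y, rfl⟩)
    · exact (Finset.singleton_nonempty x).product (H₂.nonempty_edges f hf)
    · exact (H₁.nonempty_edges e he).product (Finset.singleton_nonempty y)

section Products

variable [DecidableEq V₁] [DecidableEq V₂]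

/-- The minimal-rank-preserving direct product `H₁ ×̌ H₂`. -/
def minDirProd (H₁ : Hypergraph' V₁) (H₂ : Hypergraph' V₂) : Hypergraph' (V₁ × V₂) where
  edges := {E | ∃ e₁ ∈ H₁.edges, ∃ e₂ ∈ H₂.edges,
    E ⊆ e₁ ×ˢ e₂ ∧ E.card = min e₁.card e₂.card ∧
      (E.image Prod.fst).card = min e₁.card e₂.card ∧
      (E.image Prod.snd).card = min e₁.card e₂.card}
  nonempty_edges := by
    rintro E ⟨e₁, h₁, e₂, h₂, -, hc, -, -⟩
    rw [← Finset.card_pos, hc]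
    exact lt_min (Finset.card_pos.mpr (H₁.nonempty_edges e₁ h₁))
      (Finset.card_pos.mpr (H₂.nonempty_edges e₂ h₂))

/-- The maximal-rank-preserving direct product `H₁ ×̂ H₂`. -/
def maxDirProd (H₁ : Hypergraph' V₁) (H₂ : Hypergraph' V₂) : Hypergraph' (V₁ × V₂) where
  edges := {E | ∃ e₁ ∈ H₁.edges, ∃ e₂ ∈ H₂.edges,
    E ⊆ e₁ ×ˢ e₂ ∧ E.card = max e₁.card e₂.card ∧
      E.image Prod.fst = e₁ ∧ E.image Prod.snd = e₂}
  nonempty_edges := by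
    rintro E ⟨e₁, h₁, e₂, h₂, -, hc, -, -⟩
    rw [← Finset.card_pos, hc]
    exact lt_max_iff.mpr (Or.inl (Finset.card_pos.mpr (H₁.nonempty_edges e₁ h₁)))

/-- The non-rank-preserving direct product `H₁ ×̃ H₂`. -/
def nrDirProd (H₁ : Hypergraph' V₁) (H₂ : Hypergraph' V₂) : Hypergraph' (V₁ × V₂) where
  edges := {E | ∃ e ∈ H₁.edges, ∃ f ∈ H₂.edges, ∃ x ∈ e, ∃ y ∈ f,
    E = insert (x, y) ((e.erase x) ×ˢ (f.erase y))}
  nonempty_edges := by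
    rintro E ⟨e, -, f, -, x, -, y, -, rfl⟩
    exact Finset.insert_nonempty _ _

/-- The normal product `H₁ ⊠̌ H₂`: union of the Cartesian product edges and the
minimal-rank-preserving direct product edges. -/
def normalProd (H₁ : Hypergraph' V₁) (H₂ : Hypergraph' V₂) : Hypergraph' (V₁ × V₂) where
  edges := (H₁.cartProd H₂).edges ∪ (H₁.minDirProd H₂).edges
  nonempty_edges := by
    rintro E (h | h)
    · exact (H₁.cartProd H₂).nonempty_edges E h
    · exact (H₁.minDirProd H₂).nonempty_edges E h

/-- The strong product `H₁ ⊠̂ H₂`: union of the Cartesian product edges and the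
maximal-rank-preserving direct product edges. -/
def strongProd (H₁ : Hypergraph' V₁) (H₂ : Hypergraph' V₂) : Hypergraph' (V₁ × V₂) where
  edges := (H₁.cartProd H₂).edges ∪ (H₁.maxDirProd H₂).edges
  nonempty_edges := by
    rintro E (h | h)
    · exact (H₁.cartProd H₂).nonempty_edges E h
    · exact (H₁.maxDirProd H₂).nonempty_edges E h

/-- The lexicographic product `H₁ ∘ H₂`. -/
def lexProd (H₁ : Hypergraph' V₁) (H₂ : Hypergraph' V₂) : Hypergraph' (V₁ × V₂) where
  edges := {E | (E.image Prod.fst ∈ H₁.edges ∧ (E.image Prod.fst).card = E.card) ∨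
    ∃ x, ∃ e₂ ∈ H₂.edges, E = {x} ×ˢ e₂}
  nonempty_edges := by
    rintro E (⟨h₁, hc⟩ | ⟨x, e₂, h₂, rfl⟩)
    · rw [← Finset.card_pos, ← hc]
      exact Finset.card_pos.mpr (H₁.nonempty_edges _ h₁)
    · exact (Finset.singleton_nonempty x).product (H₂.nonempty_edges e₂ h₂)

end Products

/-- The square product `H₁ ■ H₂`. -/
def squareProd (H₁ : Hypergraph' V₁) (H₂ : Hypergraph' V₂) : Hypergraph' (V₁ × V₂) where
  edges := {E | ∃ e₁ ∈ H₁.edges, ∃ e₂ ∈ H₂.edges, E = e₁ ×ˢ e₂}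
  nonempty_edges := by
    rintro E ⟨e₁, h₁, e₂, h₂, rfl⟩
    exact (H₁.nonempty_edges e₁ h₁).product (H₂.nonempty_edges e₂ h₂)

/-- The 2-section of a hypergraph: distinct vertices are adjacent iff they lie
in a common edge. -/
def twoSection (H : Hypergraph' V) : SimpleGraph V where
  Adj x y := x ≠ y ∧ ∃ e ∈ H.edges, x ∈ e ∧ y ∈ e
  symm := by constructor; rintro x y ⟨hxy, e, he, hx, hy⟩; exact ⟨hxy.symm, e, he, hy, hx⟩
  loopless := by constructor; rintro x ⟨hx, -⟩; exact hx rfl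

end Hypergraph'

namespace SimpleGraph

variable {V₁ V₂ : Type*}

/-- The direct (tensor) product of simple graphs. -/
def directProd (G₁ : SimpleGraph V₁) (G₂ : SimpleGraph V₂) : SimpleGraph (V₁ × V₂) where
  Adj x y := G₁.Adj x.1 y.1 ∧ G₂.Adj x.2 y.2
  symm := ⟨fun _ _ ⟨h₁, h₂⟩ => ⟨h₁.symm, h₂.symm⟩⟩
  loopless := ⟨fun x h => G₁.loopless.irrefl x.1 h.1⟩

/-- The strong product of simple graphs. -/
def strongGraphProd (G₁ : SimpleGraph V₁) (G₂ : SimpleGraph V₂) : SimpleGraph (V₁ × V₂) where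
  Adj x y := x ≠ y ∧ ((x.1 = y.1 ∧ G₂.Adj x.2 y.2) ∨ (x.2 = y.2 ∧ G₁.Adj x.1 y.1) ∨
    (G₁.Adj x.1 y.1 ∧ G₂.Adj x.2 y.2))
  symm := by
    constructor
    rintro x y ⟨hne, (⟨h, h'⟩ | ⟨h, h'⟩ | ⟨h, h'⟩)⟩
    · exact ⟨hne.symm, Or.inl ⟨h.symm, h'.symm⟩⟩
    · exact ⟨hne.symm, Or.inr (Or.inl ⟨h.symm, h'.symm⟩)⟩
    · exact ⟨hne.symm, Or.inr (Or.inr ⟨h.symm, h'.symm⟩)⟩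
  loopless := by constructor; rintro x ⟨hx, -⟩; exact hx rfl

/-- The lexicographic product of simple graphs. -/
def lexGraphProd (G₁ : SimpleGraph V₁) (G₂ : SimpleGraph V₂) : SimpleGraph (V₁ × V₂) where
  Adj x y := G₁.Adj x.1 y.1 ∨ (x.1 = y.1 ∧ G₂.Adj x.2 y.2)
  symm := by
    constructor
    rintro x y (h | ⟨h, h'⟩)
    · exact Or.inl h.symm
    · exact Or.inr ⟨h.symm, h'.symm⟩
  loopless := by
    constructor
    rintro x (h | ⟨-, h⟩)
    · exact G₁.loopless.irrefl x.1 h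
    · exact G₂.loopless.irrefl x.2 h

end SimpleGraph

/-- the 2-section of the minimal-rank-preserving direct product is the
direct product of the 2-sections. -/
theorem twoSection_minDirProd {V₁ V₂ : Type*} [Fintype V₁] [Nonempty V₁] [DecidableEq V₁]
    [Fintype V₂] [Nonempty V₂] [DecidableEq V₂] (H₁ : Hypergraph' V₁) (H₂ : Hypergraph' V₂) :
    (H₁.minDirProd H₂).twoSection =
      SimpleGraph.directProd H₁.twoSection H₂.twoSection := by
  ext ⟨x, y⟩ ⟨x', y'⟩
  simp only [Hypergraph'.twoSection, Hypergraph'.minDirProd, SimpleGraph.directProd,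
    Set.mem_setOf_eq]
  constructor
  · rintro ⟨hne, E, ⟨e₁, he₁, e₂, he₂, hsub, hcard, hf, hs⟩, hmem, hmem'⟩
    have hfi : Set.InjOn Prod.fst (E : Set (V₁ × V₂)) :=
      Finset.card_image_iff.mp (by rw [hf, hcard])
    have hsi : Set.InjOn Prod.snd (E : Set (V₁ × V₂)) :=
      Finset.card_image_iff.mp (by rw [hs, hcard])
    have hx := hsub hmem
    have hx' := hsub hmem'
    rw [Finset.mem_product] at hx hx'
    refine ⟨⟨fun h => hne (hfi hmem hmem' h), e₁, he₁, hx.1, hx'.1⟩,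
      ⟨fun h => hne (hsi hmem hmem' h), e₂, he₂, hx.2, hx'.2⟩⟩
  · rintro ⟨⟨hxne, e₁, he₁, hx1, hx1'⟩, ⟨hyne, e₂, he₂, hy1, hy1'⟩⟩
    set m := min e₁.card e₂.card with hm
    have hsubx : ({x, x'} : Finset V₁) ⊆ e₁ := by
      intro a ha
      simp only [Finset.mem_insert, Finset.mem_singleton] at ha
      rcases ha with rfl | rfl <;> assumption
    have hsuby : ({y, y'} : Finset V₂) ⊆ e₂ := by
      intro a ha
      simp only [Finset.mem_insert, Finset.mem_singleton] at ha
      rcases ha with rfl | rfl <;> assumption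
    have h2x : ({x, x'} : Finset V₁).card = 2 := by
      rw [Finset.card_insert_of_notMem (by simpa using hxne), Finset.card_singleton]
    have h2y : ({y, y'} : Finset V₂).card = 2 := by
      rw [Finset.card_insert_of_notMem (by simpa using hyne), Finset.card_singleton]
    have h2m : 2 ≤ m :=
      le_min (h2x ▸ Finset.card_le_card hsubx) (h2y ▸ Finset.card_le_card hsuby)
    obtain ⟨s₁, hss₁, hse₁, hcs₁⟩ :=
      Finset.exists_subsuperset_card_eq (n := m) hsubx (by rw [h2x]; exact h2m)
        (min_le_left _ _)
    obtain ⟨s₂, hss₂, hse₂, hcs₂⟩ :=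
      Finset.exists_subsuperset_card_eq (n := m) hsuby (by rw [h2y]; exact h2m)
        (min_le_right _ _)
    have hcards : Fintype.card ↥s₁ = Fintype.card ↥s₂ := by
      simp [hcs₁, hcs₂]
    let σ₀ : ↥s₁ ≃ ↥s₂ := Fintype.equivOfCardEq hcards
    have hxs : x ∈ s₁ := hss₁ (by simp)
    have hxs' : x' ∈ s₁ := hss₁ (by simp)
    have hys : y ∈ s₂ := hss₂ (by simp)
    have hys' : y' ∈ s₂ := hss₂ (by simp)
    set a : ↥s₁ := ⟨x, hxs⟩ with hadef
    set a' : ↥s₁ := ⟨x', hxs'⟩ with ha'def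
    set b : ↥s₂ := ⟨y, hys⟩ with hbdef
    set b' : ↥s₂ := ⟨y', hys'⟩ with hb'def
    have hane : a ≠ a' := fun h => hxne (congrArg Subtype.val h)
    have hbne : b ≠ b' := fun h => hyne (congrArg Subtype.val h)
    set σ₁ : ↥s₁ ≃ ↥s₂ := σ₀.trans (Equiv.swap (σ₀ a) b) with hσ₁
    have h1 : σ₁ a = b := by simp [hσ₁]
    set σ₂ : ↥s₁ ≃ ↥s₂ := σ₁.trans (Equiv.swap (σ₁ a') b') with hσ₂
    have ha' : σ₂ a' = b' := by simp [hσ₂]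
    have hb1 : σ₁ a' ≠ b := fun h => hane (σ₁.injective (h1.trans h.symm))
    have ha : σ₂ a = b := by
      simp only [hσ₂, Equiv.trans_apply, h1]
      exact Equiv.swap_apply_of_ne_of_ne (fun h => hb1 h.symm) hbne
    set F : ↥s₁ → V₁ × V₂ := fun c => (c.1, (σ₂ c).1) with hF
    have hinj : Function.Injective F :=
      fun u v h => Subtype.ext (congrArg Prod.fst h)
    refine ⟨fun h => hxne (congrArg Prod.fst h),
      s₁.attach.image F, ⟨e₁, he₁, e₂, he₂, ?_, ?_, ?_, ?_⟩, ?_, ?_⟩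
    · intro p hp
      simp only [Finset.mem_image, Finset.mem_attach, true_and] at hp
      obtain ⟨c, rfl⟩ := hp
      exact Finset.mem_product.mpr ⟨hse₁ c.2, hse₂ (σ₂ c).2⟩
    · rw [Finset.card_image_of_injective _ hinj, Finset.card_attach, hcs₁]
    · rw [Finset.image_image]
      have : (Prod.fst ∘ F) = Subtype.val := rfl
      rw [this, Finset.attach_image_val, hcs₁]
    · rw [Finset.image_image]
      have hinj2 : Function.Injective (Prod.snd ∘ F) :=
        Subtype.val_injective.comp σ₂.injective
      rw [Finset.card_image_of_injective _ hinj2, Finset.card_attach, hcs₁]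
    · refine Finset.mem_image.mpr ⟨a, Finset.mem_attach _ _, ?_⟩
      simp only [hF, ha]
      rfl
    · refine Finset.mem_image.mpr ⟨a', Finset.mem_attach _ _, ?_⟩
      simp only [hF, ha']
      rfl
end

section
/- If H1 and H2 are simple finite hypergraphs, then their minimal-rank-preserving direct product H1×̌H2 is a simple hypergraph. -/
/-- the minimal-rank-preserving direct product of simple hypergraphs is simple. -/
theorem simple_minDirProd {V₁ V₂ : Type*} [Fintype V₁] [Nonempty V₁] [DecidableEq V₁]
    [Fintype V₂] [Nonempty V₂] [DecidableEq V₂] (H₁ : Hypergraph' V₁) (H₂ : Hypergraph' V₂)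
    (h₁ : H₁.Simple) (h₂ : H₂.Simple) :
    (H₁.minDirProd H₂).Simple := by
  constructor
  · rintro e ⟨e₁, he₁, e₂, he₂, -, hc, -, -⟩
    rw [hc]
    exact le_min (h₁.1 e₁ he₁) (h₂.1 e₂ he₂)
  · rintro E ⟨e₁, he₁, e₂, he₂, hsub, hc, hfst, hsnd⟩ F ⟨f₁, hf₁, f₂, hf₂, hsub', hc', hfst', hsnd'⟩ hEF
    apply Finset.eq_of_subset_of_card_le hEF
    rw [hc, hc']
    have hE1 : E.image Prod.fst ⊆ e₁ := by
      intro x hx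
      obtain ⟨p, hp, rfl⟩ := Finset.mem_image.mp hx
      exact (Finset.mem_product.mp (hsub hp)).1
    have hF1 : E.image Prod.fst ⊆ f₁ := by
      intro x hx
      obtain ⟨p, hp, rfl⟩ := Finset.mem_image.mp hx
      exact (Finset.mem_product.mp (hsub' (hEF hp))).1
    have hE2 : E.image Prod.snd ⊆ e₂ := by
      intro x hx
      obtain ⟨p, hp, rfl⟩ := Finset.mem_image.mp hx
      exact (Finset.mem_product.mp (hsub hp)).2
    have hF2 : E.image Prod.snd ⊆ f₂ := by
      intro x hx
      obtain ⟨p, hp, rfl⟩ := Finset.mem_image.mp hx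
      exact (Finset.mem_product.mp (hsub' (hEF hp))).2
    rcases min_cases e₁.card e₂.card with ⟨hm, _⟩ | ⟨hm, _⟩
    · have himg : E.image Prod.fst = e₁ :=
        Finset.eq_of_subset_of_card_le hE1 (by rw [hfst, hm])
      have hsubf : e₁ ⊆ f₁ := himg ▸ hF1
      have heq : e₁ = f₁ := h₁.2 e₁ he₁ f₁ hf₁ hsubf
      calc min f₁.card f₂.card ≤ f₁.card := min_le_left _ _
        _ = e₁.card := by rw [heq]
        _ = min e₁.card e₂.card := hm.symm
    · have himg : E.image Prod.snd = e₂ :=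
        Finset.eq_of_subset_of_card_le hE2 (by rw [hsnd, hm])
      have hsubf : e₂ ⊆ f₂ := himg ▸ hF2
      have heq : e₂ = f₂ := h₂.2 e₂ he₂ f₂ hf₂ hsubf
      calc min f₁.card f₂.card ≤ f₂.card := min_le_right _ _
        _ = e₂.card := by rw [heq]
        _ = min e₁.card e₂.card := hm.symm
end

section
/- For all finite hypergraphs H' and H'', the 2-section of their normal product equals the strong graph product of their 2-sections: [H' ⊠̌ H'']_2 = [H']_2 ⊠ [H'']_2 (equality of simple graphs on V(H')×V(H'')). -/
/-- Helper: given finsets `s`, `t` with `s.card ≤ t.card`, distinct `a c ∈ s` and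
distinct `b d ∈ t`, there is a "partial matching" set `E ⊆ s ×ˢ t` containing
`(a,b)` and `(c,d)` with `|E| = |s|` and both projections of cardinality `|s|`. -/
lemma exists_min_matching {V₁ V₂ : Type*} [DecidableEq V₁] [DecidableEq V₂]
    {s : Finset V₁} {t : Finset V₂} {a c : V₁} {b d : V₂}
    (ha : a ∈ s) (hc : c ∈ s) (hb : b ∈ t) (hd : d ∈ t)
    (hac : a ≠ c) (hbd : b ≠ d) (hst : s.card ≤ t.card) :
    ∃ E : Finset (V₁ × V₂), E ⊆ s ×ˢ t ∧ (a, b) ∈ E ∧ (c, d) ∈ E ∧ E.card = s.card ∧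
      (E.image Prod.fst).card = s.card ∧ (E.image Prod.snd).card = s.card := by
  have hs2 : 2 ≤ s.card := Finset.one_lt_card.mpr ⟨a, ha, c, hc, hac⟩
  set s' : Finset V₁ := (s.erase a).erase c with hs'def
  have hcmem : c ∈ s.erase a := Finset.mem_erase.mpr ⟨hac.symm, hc⟩
  have hs'card : s'.card = s.card - 2 := by
    rw [hs'def, Finset.card_erase_of_mem hcmem, Finset.card_erase_of_mem ha]
    omega
  have ht0card : ((t.erase b).erase d).card = t.card - 2 := by
    rw [Finset.card_erase_of_mem (Finset.mem_erase.mpr ⟨hbd.symm, hd⟩),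
      Finset.card_erase_of_mem hb]
    omega
  obtain ⟨t', ht'sub, ht'card⟩ := Finset.exists_subset_card_eq
    (show s.card - 2 ≤ ((t.erase b).erase d).card by omega)
  have hcards : s'.card = t'.card := by omega
  let e := Finset.equivOfCardEq hcards
  classical
  set g : V₁ → V₂ := fun x =>
    if x = a then b else if x = c then d else if h : x ∈ s' then (e ⟨x, h⟩ : V₂) else b
    with hgdef
  have hga : g a = b := by simp [hgdef]
  have hgc : g c = d := by simp [hgdef, hac.symm]
  have hgs' : ∀ x (hx : x ∈ s'), g x = ((e ⟨x, hx⟩ : t') : V₂) := by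
    intro x hx
    have hxc : x ≠ c := (Finset.mem_erase.mp hx).1
    have hxa : x ≠ a := (Finset.mem_erase.mp (Finset.mem_erase.mp hx).2).1
    simp [hgdef, hxa, hxc, hx]
  have hgs't' : ∀ x ∈ s', g x ∈ t' := by
    intro x hx
    rw [hgs' x hx]
    exact (e ⟨x, hx⟩).2
  have ht'b : ∀ y ∈ t', y ≠ b ∧ y ≠ d := by
    intro y hy
    have := ht'sub hy
    exact ⟨(Finset.mem_erase.mp (Finset.mem_erase.mp this).2).1, (Finset.mem_erase.mp this).1⟩
  have hseq : s = insert a (insert c s') := by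
    rw [hs'def, Finset.insert_erase hcmem, Finset.insert_erase ha]
  have hgmapst : ∀ x ∈ s, g x ∈ t := by
    intro x hx
    by_cases hxa : x = a
    · rw [hxa, hga]; exact hb
    by_cases hxc : x = c
    · rw [hxc, hgc]; exact hd
    have hx' : x ∈ s' := by
      rw [hs'def]
      exact Finset.mem_erase.mpr ⟨hxc, Finset.mem_erase.mpr ⟨hxa, hx⟩⟩
    have := ht'sub (hgs't' x hx')
    exact Finset.mem_of_mem_erase (Finset.mem_of_mem_erase this)
  refine ⟨s.image (fun x => (x, g x)), ?_, ?_, ?_, ?_, ?_, ?_⟩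
  · intro p hp
    obtain ⟨x, hx, rfl⟩ := Finset.mem_image.mp hp
    exact Finset.mem_product.mpr ⟨hx, hgmapst x hx⟩
  · exact Finset.mem_image.mpr ⟨a, ha, by rw [hga]⟩
  · exact Finset.mem_image.mpr ⟨c, hc, by rw [hgc]⟩
  · exact Finset.card_image_of_injective _ (fun x y h => congrArg Prod.fst h)
  · have : (Prod.fst ∘ fun x => (x, g x)) = id := rfl
    rw [Finset.image_image, this, Finset.image_id]
  · -- snd image is s.image g
    rw [Finset.image_image]
    have himg : s.image (Prod.snd ∘ fun x => (x, g x)) = s.image g := rfl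
    rw [himg]
    -- compute s.image g = insert b (insert d (s'.image g))
    have hsimg : s.image g = insert b (insert d (s'.image g)) := by
      rw [hseq, Finset.image_insert, Finset.image_insert, hga, hgc]
    have hs'img : (s'.image g).card = s'.card := by
      rw [Finset.card_image_of_injOn]
      intro x hx y hy hxy
      rw [hgs' x hx, hgs' y hy] at hxy
      exact congrArg Subtype.val (e.injective (Subtype.ext hxy))
    have hbnot : b ∉ insert d (s'.image g) := by
      intro hmem
      rcases Finset.mem_insert.mp hmem with h | h
      · exact hbd h
      · obtain ⟨x, hx, hgx⟩ := Finset.mem_image.mp h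
        exact (ht'b _ (hgs't' x hx)).1 hgx
    have hdnot : d ∉ s'.image g := by
      intro h
      obtain ⟨x, hx, hgx⟩ := Finset.mem_image.mp h
      exact (ht'b _ (hgs't' x hx)).2 hgx
    rw [hsimg, Finset.card_insert_of_notMem hbnot, Finset.card_insert_of_notMem hdnot,
      hs'img]
    omega

/-- the 2-section of the normal product is the strong product of the
2-sections. -/
theorem twoSection_normalProd {V₁ V₂ : Type*} [Fintype V₁] [Nonempty V₁] [DecidableEq V₁]
    [Fintype V₂] [Nonempty V₂] [DecidableEq V₂] (H₁ : Hypergraph' V₁) (H₂ : Hypergraph' V₂) :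
    (H₁.normalProd H₂).twoSection =
      SimpleGraph.strongGraphProd H₁.twoSection H₂.twoSection := by
  ext ⟨a, b⟩ ⟨c, d⟩
  constructor
  · rintro ⟨hne, E, hE, hab, hcd⟩
    refine ⟨hne, ?_⟩
    rcases hE with (⟨x, f, hf, rfl⟩ | ⟨e, he, y, rfl⟩) | ⟨e₁, he₁, e₂, he₂, hsub, -, -, -⟩
    · -- E = {x} ×ˢ f
      obtain ⟨hax, hbf⟩ := Finset.mem_product.mp hab
      obtain ⟨hcx, hdf⟩ := Finset.mem_product.mp hcd
      rw [Finset.mem_singleton] at hax hcx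
      subst hax; subst hcx
      have hbd : b ≠ d := fun h => hne (by rw [h])
      exact Or.inl ⟨rfl, hbd, f, hf, hbf, hdf⟩
    · -- E = e ×ˢ {y}
      obtain ⟨hae, hby⟩ := Finset.mem_product.mp hab
      obtain ⟨hce, hdy⟩ := Finset.mem_product.mp hcd
      rw [Finset.mem_singleton] at hby hdy
      subst hby; subst hdy
      have hac : a ≠ c := fun h => hne (by rw [h])
      exact Or.inr (Or.inl ⟨rfl, hac, e, he, hae, hce⟩)
    · -- minDirProd edge
      obtain ⟨hae, hbe⟩ := Finset.mem_product.mp (hsub hab)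
      obtain ⟨hce, hde⟩ := Finset.mem_product.mp (hsub hcd)
      by_cases hac : a = c
      · subst hac
        have hbd : b ≠ d := fun h => hne (by rw [h])
        exact Or.inl ⟨rfl, hbd, e₂, he₂, hbe, hde⟩
      by_cases hbd : b = d
      · subst hbd
        exact Or.inr (Or.inl ⟨rfl, hac, e₁, he₁, hae, hce⟩)
      · exact Or.inr (Or.inr ⟨⟨hac, e₁, he₁, hae, hce⟩, ⟨hbd, e₂, he₂, hbe, hde⟩⟩)
  · rintro ⟨hne, (⟨hac, hbd, f, hf, hbf, hdf⟩ | ⟨hbd, hac, e, he, hae, hce⟩ |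
      ⟨⟨hac, e₁, he₁, hae, hce⟩, hbd, e₂, he₂, hbe, hde⟩)⟩
    · refine ⟨hne, {a} ×ˢ f, Or.inl (Or.inl ⟨a, f, hf, rfl⟩), ?_, ?_⟩
      · exact Finset.mem_product.mpr ⟨Finset.mem_singleton_self a, hbf⟩
      · exact Finset.mem_product.mpr ⟨Finset.mem_singleton.mpr hac.symm, hdf⟩
    · refine ⟨hne, e ×ˢ {b}, Or.inl (Or.inr ⟨e, he, b, rfl⟩), ?_, ?_⟩
      · exact Finset.mem_product.mpr ⟨hae, Finset.mem_singleton_self b⟩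
      · exact Finset.mem_product.mpr ⟨hce, Finset.mem_singleton.mpr hbd.symm⟩
    · -- both coordinates adjacent: use a min-matching edge
      rcases le_total e₁.card e₂.card with hle | hle
      · obtain ⟨E, hEsub, hEab, hEcd, hcard, hfst, hsnd⟩ :=
          exists_min_matching hae hce hbe hde hac hbd hle
        have hmin : min e₁.card e₂.card = e₁.card := min_eq_left hle
        exact ⟨hne, E, Or.inr ⟨e₁, he₁, e₂, he₂, hEsub, by rw [hmin]; exact hcard,
          by rw [hmin]; exact hfst, by rw [hmin]; exact hsnd⟩, hEab, hEcd⟩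
      · obtain ⟨E, hEsub, hEab, hEcd, hcard, hfst, hsnd⟩ :=
          exists_min_matching hbe hde hae hce hbd hac hle
        have hmin : min e₁.card e₂.card = e₂.card := min_eq_right hle
        refine ⟨hne, E.image Prod.swap, Or.inr ⟨e₁, he₁, e₂, he₂, ?_, ?_, ?_, ?_⟩, ?_, ?_⟩
        · intro p hp
          obtain ⟨q, hq, rfl⟩ := Finset.mem_image.mp hp
          obtain ⟨h1, h2⟩ := Finset.mem_product.mp (hEsub hq)
          exact Finset.mem_product.mpr ⟨h2, h1⟩
        · rw [Finset.card_image_of_injective _ Prod.swap_injective, hmin]; exact hcard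
        · rw [hmin, Finset.image_image]
          have : (Prod.fst ∘ Prod.swap : V₂ × V₁ → V₁) = Prod.snd := rfl
          rw [this]; exact hsnd
        · rw [hmin, Finset.image_image]
          have : (Prod.snd ∘ Prod.swap : V₂ × V₁ → V₂) = Prod.fst := rfl
          rw [this]; exact hfst
        · exact Finset.mem_image.mpr ⟨(b, a), hEab, rfl⟩
        · exact Finset.mem_image.mpr ⟨(d, c), hEcd, rfl⟩
end

section
/- For all finite hypergraphs H' and H'', the 2-section of their lexicographic product equals the lexicographic graph product of their 2-sections: [H' ∘ H'']_2 = [H']_2 ∘ [H'']_2 (equality of simple graphs on V(H')×V(H'')). -/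
/-!
Basic definitions: finite hypergraphs (a finite nonempty vertex set `V`, given by
`[Fintype V] [Nonempty V]`, together with a set of nonempty edges), walks, distance,
connectedness, simplicity, rank, colorings, Helly property, covers,
the various hypergraph products, 2-sections, and graph products.
-/

/-- A hypergraph on a vertex type `V`: a collection of nonempty edges (finite subsets of `V`). -/
structure FinHypergraph (V : Type*) where
  edges : Set (Finset V)
  nonempty_edges : ∀ e ∈ edges, e.Nonempty

namespace FinHypergraph

variable {V V₁ V₂ : Type*}

/-- There is a walk of length `n` from `u` to `v`: a sequence of vertices `w 0, …, w n`
and edges `f 1, …, f n` with consecutive vertices distinct and both contained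
in the corresponding edge. -/
def HasWalk (H : FinHypergraph V) (u v : V) (n : ℕ) : Prop :=
  ∃ (w : Fin (n + 1) → V) (f : Fin n → Finset V),
    w 0 = u ∧ w (Fin.last n) = v ∧
      ∀ i : Fin n, f i ∈ H.edges ∧ w i.castSucc ≠ w i.succ ∧
        w i.castSucc ∈ f i ∧ w i.succ ∈ f i

/-- The distance between two vertices: the minimum length of a walk joining them,
`⊤ = ∞` if there is none. -/
noncomputable def dist (H : FinHypergraph V) (u v : V) : ℕ∞ :=
  sInf {x : ℕ∞ | ∃ n : ℕ, x = n ∧ H.HasWalk u v n}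

/-- A hypergraph is connected if any two vertices are joined by a walk. -/
def Connected (H : FinHypergraph V) : Prop := ∀ u v : V, ∃ n, H.HasWalk u v n

/-- A hypergraph is simple if every edge has at least two vertices and
no edge is contained in another edge. -/
def Simple (H : FinHypergraph V) : Prop :=
  (∀ e ∈ H.edges, 2 ≤ e.card) ∧ ∀ e ∈ H.edges, ∀ f ∈ H.edges, e ⊆ f → e = f

/-- A hypergraph is loopless if every edge has at least two vertices. -/
def Loopless (H : FinHypergraph V) : Prop := ∀ e ∈ H.edges, 2 ≤ e.card

/-- The rank: the maximum cardinality of an edge. -/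
noncomputable def rank (H : FinHypergraph V) : ℕ := sSup (Finset.card '' H.edges)

/-- The anti-rank: the minimum cardinality of an edge. -/
noncomputable def antirank (H : FinHypergraph V) : ℕ := sInf (Finset.card '' H.edges)

/-- A proper coloring: no color class contains an edge. -/
def IsProperColoring (H : FinHypergraph V) {k : ℕ} (c : V → Fin k) : Prop :=
  ∀ e ∈ H.edges, ∀ i : Fin k, ¬ ∀ v ∈ e, c v = i

/-- A proper strong coloring: a proper coloring in which the vertices of every
edge receive pairwise distinct colors. -/
def IsStrongColoring (H : FinHypergraph V) {k : ℕ} (c : V → Fin k) : Prop :=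
  H.IsProperColoring c ∧ ∀ e ∈ H.edges, ∀ u ∈ e, ∀ v ∈ e, u ≠ v → c u ≠ c v

/-- The chromatic number: the least `k` admitting a proper `k`-coloring. -/
noncomputable def chromaticNumber (H : FinHypergraph V) : ℕ :=
  sInf {k : ℕ | ∃ c : V → Fin k, H.IsProperColoring c}

/-- The strong chromatic number: the least `k` admitting a proper strong `k`-coloring. -/
noncomputable def strongChromaticNumber (H : FinHypergraph V) : ℕ :=
  sInf {k : ℕ | ∃ c : V → Fin k, H.IsStrongColoring c}

/-- The Helly property: every intersecting family of edges is a star. -/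
def Helly (H : FinHypergraph V) : Prop :=
  ∀ E' ⊆ H.edges, (∀ e ∈ E', ∀ f ∈ E', ∃ x, x ∈ e ∧ x ∈ f) → ∃ v, ∀ e ∈ E', v ∈ e

/-- The covering number: the minimum cardinality of a set of vertices meeting every edge. -/
noncomputable def coverNumber (H : FinHypergraph V) : ℕ :=
  sInf {k : ℕ | ∃ T : Finset V, T.card = k ∧ ∀ e ∈ H.edges, ∃ v ∈ T, v ∈ e}

/-- The Cartesian product of hypergraphs. -/
def cartProd (H₁ : FinHypergraph V₁) (H₂ : FinHypergraph V₂) : FinHypergraph (V₁ × V₂) where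
  edges := {E | (∃ x, ∃ f ∈ H₂.edges, E = {x} ×ˢ f) ∨ ∃ e ∈ H₁.edges, ∃ y, E = e ×ˢ {y}}
  nonempty_edges := by
    rintro E (⟨x, f, hf, rfl⟩ | ⟨e, he, y, rfl⟩)
    · exact (Finset.singleton_nonempty x).product (H₂.nonempty_edges f hf)
    · exact (H₁.nonempty_edges e he).product (Finset.singleton_nonempty y)

section Products

variable [DecidableEq V₁] [DecidableEq V₂]

/-- The minimal-rank-preserving direct product `H₁ ×̌ H₂`. -/
def minDirProd (H₁ : FinHypergraph V₁) (H₂ : FinHypergraph V₂) : FinHypergraph (V₁ × V₂) where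
  edges := {E | ∃ e₁ ∈ H₁.edges, ∃ e₂ ∈ H₂.edges,
    E ⊆ e₁ ×ˢ e₂ ∧ E.card = min e₁.card e₂.card ∧
      (E.image Prod.fst).card = min e₁.card e₂.card ∧
      (E.image Prod.snd).card = min e₁.card e₂.card}
  nonempty_edges := by
    rintro E ⟨e₁, h₁, e₂, h₂, -, hc, -, -⟩
    rw [← Finset.card_pos, hc]
    exact lt_min (Finset.card_pos.mpr (H₁.nonempty_edges e₁ h₁))
      (Finset.card_pos.mpr (H₂.nonempty_edges e₂ h₂))

/-- The maximal-rank-preserving direct product `H₁ ×̂ H₂`. -/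
def maxDirProd (H₁ : FinHypergraph V₁) (H₂ : FinHypergraph V₂) : FinHypergraph (V₁ × V₂) where
  edges := {E | ∃ e₁ ∈ H₁.edges, ∃ e₂ ∈ H₂.edges,
    E ⊆ e₁ ×ˢ e₂ ∧ E.card = max e₁.card e₂.card ∧
      E.image Prod.fst = e₁ ∧ E.image Prod.snd = e₂}
  nonempty_edges := by
    rintro E ⟨e₁, h₁, e₂, h₂, -, hc, -, -⟩
    rw [← Finset.card_pos, hc]
    exact lt_max_iff.mpr (Or.inl (Finset.card_pos.mpr (H₁.nonempty_edges e₁ h₁)))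

/-- The non-rank-preserving direct product `H₁ ×̃ H₂`. -/
def nrDirProd (H₁ : FinHypergraph V₁) (H₂ : FinHypergraph V₂) : FinHypergraph (V₁ × V₂) where
  edges := {E | ∃ e ∈ H₁.edges, ∃ f ∈ H₂.edges, ∃ x ∈ e, ∃ y ∈ f,
    E = insert (x, y) ((e.erase x) ×ˢ (f.erase y))}
  nonempty_edges := by
    rintro E ⟨e, -, f, -, x, -, y, -, rfl⟩
    exact Finset.insert_nonempty _ _

/-- The normal product `H₁ ⊠̌ H₂`: union of the Cartesian product edges and the
minimal-rank-preserving direct product edges. -/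
def normalProd (H₁ : FinHypergraph V₁) (H₂ : FinHypergraph V₂) : FinHypergraph (V₁ × V₂) where
  edges := (H₁.cartProd H₂).edges ∪ (H₁.minDirProd H₂).edges
  nonempty_edges := by
    rintro E (h | h)
    · exact (H₁.cartProd H₂).nonempty_edges E h
    · exact (H₁.minDirProd H₂).nonempty_edges E h

/-- The strong product `H₁ ⊠̂ H₂`: union of the Cartesian product edges and the
maximal-rank-preserving direct product edges. -/
def strongProd (H₁ : FinHypergraph V₁) (H₂ : FinHypergraph V₂) : FinHypergraph (V₁ × V₂) where
  edges := (H₁.cartProd H₂).edges ∪ (H₁.maxDirProd H₂).edges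
  nonempty_edges := by
    rintro E (h | h)
    · exact (H₁.cartProd H₂).nonempty_edges E h
    · exact (H₁.maxDirProd H₂).nonempty_edges E h

/-- The lexicographic product `H₁ ∘ H₂`. -/
def lexProd (H₁ : FinHypergraph V₁) (H₂ : FinHypergraph V₂) : FinHypergraph (V₁ × V₂) where
  edges := {E | (E.image Prod.fst ∈ H₁.edges ∧ (E.image Prod.fst).card = E.card) ∨
    ∃ x, ∃ e₂ ∈ H₂.edges, E = {x} ×ˢ e₂}
  nonempty_edges := by
    rintro E (⟨h₁, hc⟩ | ⟨x, e₂, h₂, rfl⟩)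
    · rw [← Finset.card_pos, ← hc]
      exact Finset.card_pos.mpr (H₁.nonempty_edges _ h₁)
    · exact (Finset.singleton_nonempty x).product (H₂.nonempty_edges e₂ h₂)

end Products

/-- The square product `H₁ ■ H₂`. -/
def squareProd (H₁ : FinHypergraph V₁) (H₂ : FinHypergraph V₂) : FinHypergraph (V₁ × V₂) where
  edges := {E | ∃ e₁ ∈ H₁.edges, ∃ e₂ ∈ H₂.edges, E = e₁ ×ˢ e₂}
  nonempty_edges := by
    rintro E ⟨e₁, h₁, e₂, h₂, rfl⟩
    exact (H₁.nonempty_edges e₁ h₁).product (H₂.nonempty_edges e₂ h₂)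

/-- The 2-section of a hypergraph: distinct vertices are adjacent iff they lie
in a common edge. -/
def twoSection (H : FinHypergraph V) : SimpleGraph V where
  Adj x y := x ≠ y ∧ ∃ e ∈ H.edges, x ∈ e ∧ y ∈ e
  symm := by constructor; rintro x y ⟨hxy, e, he, hx, hy⟩; exact ⟨hxy.symm, e, he, hy, hx⟩
  loopless := by constructor; rintro x ⟨hx, -⟩; exact hx rfl

end FinHypergraph

/-- the 2-section of the lexicographic product is the lexicographic product
of the 2-sections. -/
theorem twoSection_lexProd {V₁ V₂ : Type*} [Fintype V₁] [Nonempty V₁] [DecidableEq V₁]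
    [Fintype V₂] [Nonempty V₂] [DecidableEq V₂] (H₁ : FinHypergraph V₁) (H₂ : FinHypergraph V₂) :
    (H₁.lexProd H₂).twoSection =
      SimpleGraph.lexGraphProd H₁.twoSection H₂.twoSection := by
  ext x y
  constructor
  · rintro ⟨hne, E, hE, hx, hy⟩
    rcases hE with ⟨h₁, hc⟩ | ⟨a, e₂, h₂, rfl⟩
    · have hinj : Set.InjOn Prod.fst (E : Set (V₁ × V₂)) :=
        Finset.injOn_of_card_image_eq hc
      have hne1 : x.1 ≠ y.1 := fun h => hne (hinj hx hy (by simpa using h))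
      exact Or.inl ⟨hne1, _, h₁, Finset.mem_image_of_mem _ hx,
        Finset.mem_image_of_mem _ hy⟩
    · simp only [Finset.mem_product, Finset.mem_singleton] at hx hy
      refine Or.inr ⟨hx.1.trans hy.1.symm, ?_, e₂, h₂, hx.2, hy.2⟩
      intro h2
      exact hne (Prod.ext (hx.1.trans hy.1.symm) h2)
  · rintro (⟨hne1, e₁, h₁, hx1, hy1⟩ | ⟨heq, hne2, e₂, h₂, hx2, hy2⟩)
    · have hne : x ≠ y := fun h => hne1 (by rw [h])
      refine ⟨hne, e₁.image (fun v => (v, if v = x.1 then x.2 else if v = y.1 then y.2 else x.2)),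
        Or.inl ⟨?_, ?_⟩, ?_, ?_⟩
      · rw [Finset.image_image, show (Prod.fst ∘ fun v : V₁ => (v, if v = x.1 then x.2 else if v = y.1 then y.2 else x.2)) = id from rfl, Finset.image_id]
        exact h₁
      · rw [Finset.image_image, show (Prod.fst ∘ fun v : V₁ => (v, if v = x.1 then x.2 else if v = y.1 then y.2 else x.2)) = id from rfl, Finset.image_id, Finset.card_image_of_injective _ (fun a b h => congrArg Prod.fst h)]
      · refine Finset.mem_image.mpr ⟨x.1, hx1, ?_⟩
        simp
      · refine Finset.mem_image.mpr ⟨y.1, hy1, ?_⟩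
        simp [if_neg (Ne.symm hne1), Ne.symm hne1]
    · have hne : x ≠ y := fun h => hne2 (by rw [h])
      exact ⟨hne, {x.1} ×ˢ e₂, Or.inr ⟨x.1, e₂, h₂, rfl⟩,
        Finset.mem_product.mpr ⟨Finset.mem_singleton_self _, hx2⟩,
        Finset.mem_product.mpr ⟨by simp [heq], hy2⟩⟩
end
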